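/- Let (Ω, 𝓕, ℙ) be a probability space, L∞(ℙ) the Banach lattice of essentially bounded real-valued random variables with unit e the a.s. constant function 1, and Δ(ℙ) the set of continuous linear functionals p on L∞(ℙ) with p(e) = 1 and p(X) ≥ 0 whenever X ≥ 0 a.s. Let μ : L∞(ℙ) → ℝ be a risk measure that is positively homogeneous, i.e., μ(λX) = λμ(X) for all λ ≥ 0. Then for every X ∈ L∞(ℙ), μ(X) = min_{Y ∈ L∞(ℙ), μ(Y) = 0} max_{p ∈ Δ(ℙ), p(Y) ≥ 0} p(−X), both the minimum (over Y with μ(Y)=0) and the maximum being attained. -/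

import Mathlib

set_option maxHeartbeats 1000000
open MeasureTheory

set_option linter.unusedSectionVars false

section Aux
variable {Ω : Type*} [MeasurableSpace Ω] (ℙ : Measure Ω) [IsProbabilityMeasure ℙ]

noncomputable def ee : Lp ℝ ⊤ ℙ := MemLp.toLp (fun _ : Ω => (1 : ℝ)) (memLp_const 1)

noncomputable def NN (Z : Lp ℝ ⊤ ℙ) : ℝ := sInf {c : ℝ | Z ≤ c • ee ℙ}

variable {ℙ}

lemma ee_coe : (ee ℙ : Ω → ℝ) =ᵐ[ℙ] fun _ => (1:ℝ) := MemLp.coeFn_toLp _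

lemma smul_ee_coe (c : ℝ) : ((c • ee ℙ : Lp ℝ ⊤ ℙ) : Ω → ℝ) =ᵐ[ℙ] fun _ => c := by
  filter_upwards [Lp.coeFn_smul c (ee ℙ), ee_coe (ℙ := ℙ)] with ω h1 h2
  simp [h1, h2]

lemma le_smul_ee_iff (Z : Lp ℝ ⊤ ℙ) (c : ℝ) : Z ≤ c • ee ℙ ↔ ∀ᵐ ω ∂ℙ, Z ω ≤ c := by
  rw [← Lp.coeFn_le]
  constructor
  · intro h; filter_upwards [h, smul_ee_coe (ℙ := ℙ) c] with ω h1 h2; rw [h2] at h1; exact h1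
  · intro h; filter_upwards [h, smul_ee_coe (ℙ := ℙ) c] with ω h1 h2; rw [h2]; exact h1

lemma smul_ee_le_iff (Z : Lp ℝ ⊤ ℙ) (c : ℝ) : c • ee ℙ ≤ Z ↔ ∀ᵐ ω ∂ℙ, c ≤ Z ω := by
  rw [← Lp.coeFn_le]
  constructor
  · intro h; filter_upwards [h, smul_ee_coe (ℙ := ℙ) c] with ω h1 h2; rw [h2] at h1; exact h1
  · intro h; filter_upwards [h, smul_ee_coe (ℙ := ℙ) c] with ω h1 h2; rw [h2]; exact h1

lemma ae_norm_le (Z : Lp ℝ ⊤ ℙ) : ∀ᵐ ω ∂ℙ, ‖Z ω‖ ≤ ‖Z‖ := by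
  have h := enorm_ae_le_eLpNormEssSup (Z : Ω → ℝ) ℙ
  have hne : eLpNorm (Z : Ω → ℝ) ⊤ ℙ ≠ ⊤ := Lp.eLpNorm_ne_top Z
  rw [eLpNorm_exponent_top] at hne
  filter_upwards [h] with ω hω
  have := ENNReal.toReal_mono hne hω
  simpa [Lp.norm_def, eLpNorm_exponent_top] using this

lemma NN_set_nonempty (Z : Lp ℝ ⊤ ℙ) : ‖Z‖ ∈ {c : ℝ | Z ≤ c • ee ℙ} := by
  rw [Set.mem_setOf_eq, le_smul_ee_iff]
  filter_upwards [ae_norm_le Z] with ω h using le_trans (le_abs_self _) h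

lemma NN_set_bddBelow (Z : Lp ℝ ⊤ ℙ) : BddBelow {c : ℝ | Z ≤ c • ee ℙ} := by
  refine ⟨-‖Z‖, fun c hc => ?_⟩
  rw [Set.mem_setOf_eq, le_smul_ee_iff] at hc
  have hae : ∀ᵐ ω ∂ℙ, -‖Z‖ ≤ c := by
    filter_upwards [hc, ae_norm_le Z] with ω h1 h2
    have h3 := abs_le.mp h2
    linarith [h3.1]
  haveI : (ae ℙ).NeBot := ae_neBot.mpr (IsProbabilityMeasure.ne_zero ℙ)
  exact hae.exists.choose_spec

lemma NN_le {Z : Lp ℝ ⊤ ℙ} {c : ℝ} (h : Z ≤ c • ee ℙ) : NN ℙ Z ≤ c :=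
  csInf_le (NN_set_bddBelow Z) h

lemma NN_le_norm (Z : Lp ℝ ⊤ ℙ) : NN ℙ Z ≤ ‖Z‖ := NN_le (NN_set_nonempty Z)

lemma le_NN_smul_ee (Z : Lp ℝ ⊤ ℙ) : Z ≤ NN ℙ Z • ee ℙ := by
  rw [le_smul_ee_iff]
  have hn : ∀ n : ℕ, ∀ᵐ ω ∂ℙ, Z ω ≤ NN ℙ Z + 1 / (n + 1) := by
    intro n
    obtain ⟨c, hc, hlt⟩ := exists_lt_of_csInf_lt (s := {c : ℝ | Z ≤ c • ee ℙ})
      ⟨_, NN_set_nonempty Z⟩ (lt_add_of_pos_right (NN ℙ Z) (by positivity : (0:ℝ) < 1/(n+1)))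
    rw [Set.mem_setOf_eq, le_smul_ee_iff] at hc
    filter_upwards [hc] with ω h using h.trans hlt.le
  filter_upwards [ae_all_iff.mpr hn] with ω h
  refine le_of_forall_pos_le_add fun ε hε => ?_
  obtain ⟨n, hn'⟩ := exists_nat_one_div_lt hε
  exact (h n).trans (by linarith)

lemma le_NN {Z : Lp ℝ ⊤ ℙ} {c : ℝ} (h : c • ee ℙ ≤ Z) : c ≤ NN ℙ Z := by
  rw [smul_ee_le_iff] at h
  have h2 := (le_smul_ee_iff Z (NN ℙ Z)).mp (le_NN_smul_ee Z)
  haveI : (ae ℙ).NeBot := ae_neBot.mpr (IsProbabilityMeasure.ne_zero ℙ)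
  obtain ⟨ω, h1, h2⟩ := (h.and h2).exists
  linarith

lemma NN_zero : NN ℙ (0 : Lp ℝ ⊤ ℙ) = 0 := by
  refine le_antisymm (NN_le ?_) (le_NN ?_)
  · rw [le_smul_ee_iff]; filter_upwards [Lp.coeFn_zero ℝ ⊤ ℙ] with ω h; simp [h]
  · rw [smul_ee_le_iff]; filter_upwards [Lp.coeFn_zero ℝ ⊤ ℙ] with ω h; simp [h]

lemma NN_add (Z W : Lp ℝ ⊤ ℙ) : NN ℙ (Z + W) ≤ NN ℙ Z + NN ℙ W := by
  refine NN_le ?_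
  rw [le_smul_ee_iff]
  have h1 := (le_smul_ee_iff Z (NN ℙ Z)).mp (le_NN_smul_ee Z)
  have h2 := (le_smul_ee_iff W (NN ℙ W)).mp (le_NN_smul_ee W)
  filter_upwards [h1, h2, Lp.coeFn_add Z W] with ω a b c
  rw [c]; exact add_le_add a b

lemma NN_smul {t : ℝ} (ht : 0 < t) (Z : Lp ℝ ⊤ ℙ) : NN ℙ (t • Z) = t * NN ℙ Z := by
  have h := (le_smul_ee_iff Z (NN ℙ Z)).mp (le_NN_smul_ee Z)
  have h' := (le_smul_ee_iff (t • Z) (NN ℙ (t • Z))).mp (le_NN_smul_ee (t • Z))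
  refine le_antisymm (NN_le ?_) ?_
  · rw [le_smul_ee_iff]
    filter_upwards [h, Lp.coeFn_smul t Z] with ω a b
    rw [b]; exact mul_le_mul_of_nonneg_left a ht.le
  · have : NN ℙ Z ≤ NN ℙ (t • Z) / t := by
      refine NN_le ?_
      rw [le_smul_ee_iff]
      filter_upwards [h', Lp.coeFn_smul t Z] with ω a b
      rw [b] at a
      exact (le_div_iff₀' ht).mpr a
    calc t * NN ℙ Z ≤ t * (NN ℙ (t • Z) / t) := by nlinarith
    _ = NN ℙ (t • Z) := by field_simp

lemma NN_smul_ee (c : ℝ) : NN ℙ (c • ee ℙ) = c :=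
  le_antisymm (NN_le le_rfl) (le_NN le_rfl)

lemma smul_NN_le (s : ℝ) (Z : Lp ℝ ⊤ ℙ) : s * NN ℙ Z ≤ NN ℙ (s • Z) := by
  rcases lt_trichotomy s 0 with h | h | h
  · have hpos : 0 < -s := by linarith
    have hsub : (0:ℝ) ≤ NN ℙ Z + NN ℙ (-Z) := by
      have := NN_add Z (-Z); simp [NN_zero] at this ⊢; linarith [this]
    have : NN ℙ (s • Z) = (-s) * NN ℙ (-Z) := by
      rw [← NN_smul hpos (-Z)]; congr 1; simp [smul_neg, neg_smul]
    rw [this]; nlinarith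
  · simp [h, NN_zero]
  · rw [NN_smul h]

lemma NN_add_smul_ee (Z : Lp ℝ ⊤ ℙ) (t : ℝ) : NN ℙ (Z + t • ee ℙ) = NN ℙ Z + t := by
  have key : ∀ (W : Lp ℝ ⊤ ℙ) (s : ℝ), NN ℙ (W + s • ee ℙ) ≤ NN ℙ W + s := by
    intro W s
    refine NN_le ?_
    rw [le_smul_ee_iff]
    filter_upwards [(le_smul_ee_iff W (NN ℙ W)).mp (le_NN_smul_ee W),
      Lp.coeFn_add W (s • ee ℙ), smul_ee_coe (ℙ := ℙ) s] with ω a b c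
    rw [b, Pi.add_apply, c]; linarith
  refine le_antisymm (key Z t) ?_
  have h2 := key (Z + t • ee ℙ) (-t)
  have : Z + t • ee ℙ + (-t) • ee ℙ = Z := by
    rw [add_assoc, ← add_smul]; simp
  rw [this] at h2; linarith


lemma HB2 (Y X : Lp ℝ ⊤ ℙ) (a b : ℝ)
    (hab : ∀ s t : ℝ, s * a + t * b ≤ NN ℙ (s • Y + t • X)) :
    ∃ g : Lp ℝ ⊤ ℙ →ₗ[ℝ] ℝ, (∀ W, g W ≤ NN ℙ W) ∧ g Y = a ∧ g X = b := by
  let T : (ℝ × ℝ) →ₗ[ℝ] Lp ℝ ⊤ ℙ :=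
    (LinearMap.toSpanSingleton ℝ _ Y).coprod (LinearMap.toSpanSingleton ℝ _ X)
  have hT : ∀ v : ℝ × ℝ, T v = v.1 • Y + v.2 • X := fun v => rfl
  let f₀ : (ℝ × ℝ) →ₗ[ℝ] ℝ := a • LinearMap.fst ℝ ℝ ℝ + b • LinearMap.snd ℝ ℝ ℝ
  have hf₀ : ∀ v : ℝ × ℝ, f₀ v = v.1 * a + v.2 * b := by
    intro v; simp [f₀, mul_comm]
  have hker : LinearMap.ker T ≤ LinearMap.ker f₀ := by
    intro v hv
    rw [LinearMap.mem_ker] at hv ⊢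
    have h1 := hab v.1 v.2
    have h2 := hab (-v.1) (-v.2)
    rw [← hT v, hv, NN_zero] at h1
    have hneg : (-v.1) • Y + (-v.2) • X = -(T v) := by
      rw [hT v]; simp [neg_smul]; abel
    rw [hneg, hv, neg_zero, NN_zero] at h2
    rw [hf₀ v]; nlinarith [h1, h2]
  let fq := Submodule.liftQ (LinearMap.ker T) f₀ hker
  let eqv := T.quotKerEquivRange
  let F : Lp ℝ ⊤ ℙ →ₗ.[ℝ] ℝ := ⟨LinearMap.range T, fq.comp eqv.symm.toLinearMap⟩
  have hFapp : ∀ v : ℝ × ℝ, F ⟨T v, LinearMap.mem_range_self T v⟩ = f₀ v := by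
    intro v
    have hsymm : eqv.symm ⟨T v, LinearMap.mem_range_self T v⟩
        = Submodule.Quotient.mk v := by
      rw [LinearEquiv.symm_apply_eq]
      exact Subtype.ext (by simp [eqv, LinearMap.quotKerEquivRange_apply_mk])
    show fq (eqv.symm ⟨T v, LinearMap.mem_range_self T v⟩) = f₀ v
    rw [hsymm, Submodule.liftQ_apply]
  have hf : ∀ x : F.domain, F x ≤ NN ℙ x := by
    rintro ⟨x, hx⟩
    obtain ⟨v, hv⟩ := hx
    have hxeq : (⟨x, ⟨v, hv⟩⟩ : F.domain) = ⟨T v, LinearMap.mem_range_self T v⟩ :=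
      Subtype.ext hv.symm
    rw [hxeq, hFapp v, hf₀ v]
    have := hab v.1 v.2
    rw [← hT v] at this
    exact this
  obtain ⟨g, hg1, hg2⟩ := exists_extension_of_le_sublinear F (NN ℙ)
    (fun c hc x => NN_smul hc x) NN_add hf
  refine ⟨g, hg2, ?_, ?_⟩
  · have h1 : T (1, 0) = Y := by rw [hT]; simp
    have := hg1 ⟨T (1, 0), LinearMap.mem_range_self T (1, 0)⟩
    rw [hFapp (1, 0), hf₀] at this
    simpa [h1] using this
  · have h1 : T (0, 1) = X := by rw [hT]; simp
    have := hg1 ⟨T (0, 1), LinearMap.mem_range_self T (0, 1)⟩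
    rw [hFapp (0, 1), hf₀] at this
    simpa [h1] using this

lemma HB1 (Z : Lp ℝ ⊤ ℙ) :
    ∃ g : Lp ℝ ⊤ ℙ →ₗ[ℝ] ℝ, (∀ W, g W ≤ NN ℙ W) ∧ g Z = NN ℙ Z := by
  have hab : ∀ s t : ℝ, s * NN ℙ Z + t * 1 ≤ NN ℙ (s • Z + t • ee ℙ) := by
    intro s t
    have h3 := smul_NN_le s Z
    have h4 : NN ℙ (s • Z + t • ee ℙ) = NN ℙ (s • Z) + t := NN_add_smul_ee _ t
    linarith
  obtain ⟨g, h1, h2, _⟩ := HB2 Z (ee ℙ) (NN ℙ Z) 1 hab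
  exact ⟨g, h1, h2⟩

lemma key_lemma {ρ : Lp ℝ ⊤ ℙ → ℝ}
    (hmono : ∀ X Y : Lp ℝ ⊤ ℙ, X ≤ Y → ρ Y ≤ ρ X)
    (hadd : ∀ (X : Lp ℝ ⊤ ℙ) (c : ℝ), ρ (X + c • ee ℙ) = ρ X - c)
    (hpos : ∀ (c : ℝ), 0 ≤ c → ∀ X : Lp ℝ ⊤ ℙ, ρ (c • X) = c * ρ X)
    (Y X : Lp ℝ ⊤ ℙ) (hY : ρ Y = 0) :
    ∃ p : Lp ℝ ⊤ ℙ →L[ℝ] ℝ,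
      (p (ee ℙ) = 1 ∧ ∀ Z : Lp ℝ ⊤ ℙ, 0 ≤ Z → 0 ≤ p Z) ∧ 0 ≤ p Y ∧ ρ X ≤ p (-X) := by
  have hρ0 : ρ 0 = 0 := by
    have := hpos 0 le_rfl 0; simpa using this
  have hρce : ∀ c : ℝ, ρ (c • ee ℙ) = -c := by
    intro c; have := hadd 0 c; simpa [hρ0] using this
  have hNNY : 0 ≤ NN ℙ Y := by
    by_contra h
    push_neg at h
    have h2 := hmono _ _ (le_NN_smul_ee Y)
    rw [hρce, hY] at h2
    linarith
  set m := ρ X with hm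
  have hkey : ∀ l : ℝ, 0 ≤ l → m ≤ NN ℙ (l • Y - X) := by
    intro l hl
    set c := NN ℙ (l • Y - X) with hc
    have h1 : l • Y - X ≤ c • ee ℙ := le_NN_smul_ee _
    have h2 : l • Y - c • ee ℙ ≤ X := sub_le_comm.mp h1
    have h3 := hmono _ _ h2
    have h4 : ρ (l • Y - c • ee ℙ) = ρ (l • Y) + c := by
      rw [sub_eq_add_neg, ← neg_smul, hadd]; ring
    have h5 : ρ (l • Y) = 0 := by rw [hpos l hl, hY, mul_zero]
    rw [h4, h5] at h3
    simpa using h3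
  set G : Set (ℝ × ℝ) :=
    {ab | ∀ st : ℝ × ℝ, st.1 * ab.1 + st.2 * ab.2 ≤ NN ℙ (st.1 • Y + st.2 • X)} with hGdef
  set Q : Set (ℝ × ℝ) := {ab | 0 ≤ ab.1 ∧ ab.2 ≤ -m} with hQdef
  have hGconv : Convex ℝ G := by
    intro ab hab ab' hab' θ θ' hθ hθ' hsum
    intro st
    have h1 := hab st
    have h2 := hab' st
    have e1 : (θ • ab + θ' • ab').1 = θ * ab.1 + θ' * ab'.1 := rfl
    have e2 : (θ • ab + θ' • ab').2 = θ * ab.2 + θ' * ab'.2 := rfl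
    rw [e1, e2]
    have k1 := mul_le_mul_of_nonneg_left h1 hθ
    have k2 := mul_le_mul_of_nonneg_left h2 hθ'
    have : θ * NN ℙ (st.1 • Y + st.2 • X) + θ' * NN ℙ (st.1 • Y + st.2 • X)
        = NN ℙ (st.1 • Y + st.2 • X) := by rw [← add_mul, hsum, one_mul]
    nlinarith [k1, k2]
  have hGcl : IsClosed G := by
    have : G = ⋂ st : ℝ × ℝ,
        {ab : ℝ × ℝ | st.1 * ab.1 + st.2 * ab.2 ≤ NN ℙ (st.1 • Y + st.2 • X)} := by
      ext ab; simp [hGdef, Set.mem_iInter]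
    rw [this]
    exact isClosed_iInter fun st => isClosed_le (by fun_prop) continuous_const
  have hGcomp : IsCompact G := by
    refine Metric.isCompact_of_isClosed_isBounded hGcl ?_
    refine (Metric.isBounded_closedBall (x := (0 : ℝ × ℝ))
      (r := max ‖Y‖ ‖X‖)).subset ?_
    intro ab hab
    have h1 := hab (1, 0)
    have h2 := hab (-1, 0)
    have h3 := hab (0, 1)
    have h4 := hab (0, -1)
    simp only [one_mul, zero_mul, add_zero, zero_add, neg_mul, one_smul, zero_smul,
      neg_one_smul, neg_smul] at h1 h2 h3 h4
    have n1 : NN ℙ Y ≤ ‖Y‖ := NN_le_norm Y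
    have n2 : NN ℙ (-Y) ≤ ‖Y‖ := by have := NN_le_norm (-Y); rwa [norm_neg] at this
    have n3 : NN ℙ X ≤ ‖X‖ := NN_le_norm X
    have n4 : NN ℙ (-X) ≤ ‖X‖ := by have := NN_le_norm (-X); rwa [norm_neg] at this
    rw [mem_closedBall_zero_iff, Prod.norm_def]
    have hY1 : |ab.1| ≤ ‖Y‖ := abs_le.mpr ⟨by linarith, by linarith⟩
    have hX1 : |ab.2| ≤ ‖X‖ := abs_le.mpr ⟨by linarith, by linarith⟩
    rw [Real.norm_eq_abs, Real.norm_eq_abs]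
    exact max_le_max hY1 hX1
  have hQconv : Convex ℝ Q := by
    intro ab hab ab' hab' θ θ' hθ hθ' hsum
    constructor
    · have e1 : (θ • ab + θ' • ab').1 = θ * ab.1 + θ' * ab'.1 := rfl
      rw [e1]
      exact add_nonneg (mul_nonneg hθ hab.1) (mul_nonneg hθ' hab'.1)
    · have e2 : (θ • ab + θ' • ab').2 = θ * ab.2 + θ' * ab'.2 := rfl
      rw [e2]
      calc θ * ab.2 + θ' * ab'.2 ≤ θ * (-m) + θ' * (-m) :=
            add_le_add (mul_le_mul_of_nonneg_left hab.2 hθ)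
              (mul_le_mul_of_nonneg_left hab'.2 hθ')
        _ = -m := by rw [← add_mul, hsum, one_mul]
  have hQcl : IsClosed Q := by
    have : Q = {ab : ℝ × ℝ | 0 ≤ ab.1} ∩ {ab : ℝ × ℝ | ab.2 ≤ -m} := rfl
    rw [this]
    exact (isClosed_le continuous_const continuous_fst).inter
      (isClosed_le continuous_snd continuous_const)
  have hGQ : ¬ Disjoint G Q := by
    intro hdis
    obtain ⟨f, u, v, hGf, huv, hQf⟩ :=
      geometric_hahn_banach_compact_closed hGconv hGcomp hQconv hQcl hdis
    set α := f (1, 0) with hα'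
    set β := f (0, 1) with hβ'
    have hfab : ∀ ab : ℝ × ℝ, f ab = ab.1 * α + ab.2 * β := by
      intro ab
      have hd : ab = ab.1 • ((1 : ℝ), (0 : ℝ)) + ab.2 • ((0 : ℝ), (1 : ℝ)) := by
        ext <;> simp
      conv_lhs => rw [hd]
      rw [map_add, f.map_smul, f.map_smul, smul_eq_mul, smul_eq_mul]
    have hQv : ∀ a b : ℝ, 0 ≤ a → b ≤ -m → v < a * α + b * β := by
      intro a b ha hb
      have := hQf (a, b) ⟨ha, hb⟩
      rwa [hfab] at this
    have hβ : β ≤ 0 := by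
      by_contra h
      push_neg at h
      have h1 := hQv 0 (min (-m) ((v - 1) / β)) le_rfl (min_le_left _ _)
      have h2 : (min (-m) ((v - 1) / β)) * β ≤ v - 1 := by
        have h3 := min_le_right (-m) ((v - 1) / β)
        calc (min (-m) ((v - 1) / β)) * β ≤ ((v - 1) / β) * β :=
              mul_le_mul_of_nonneg_right h3 h.le
          _ = v - 1 := div_mul_cancel₀ _ h.ne'
      rw [zero_mul, zero_add] at h1
      linarith
    have hα : 0 ≤ α := by
      by_contra h
      push_neg at h
      have h1 := hQv (max 0 ((v + m * β - 1) / α)) (-m) (le_max_left _ _) le_rfl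
      have h2 : (max 0 ((v + m * β - 1) / α)) * α ≤ v + m * β - 1 := by
        have h3 := le_max_right 0 ((v + m * β - 1) / α)
        have h4 : (max 0 ((v + m * β - 1) / α)) * α ≤ ((v + m * β - 1) / α) * α := by
          nlinarith
        rw [div_mul_cancel₀ _ h.ne] at h4
        exact h4
      nlinarith
    obtain ⟨g, hg1, hg2⟩ := HB1 (α • Y + β • X)
    have hgG : (g Y, g X) ∈ G := by
      intro st
      have h1 : st.1 * g Y + st.2 * g X = g (st.1 • Y + st.2 • X) := by
        rw [map_add, g.map_smul, g.map_smul, smul_eq_mul, smul_eq_mul]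
      rw [h1]
      exact hg1 _
    have hGlt := hGf _ hgG
    rw [hfab] at hGlt
    have hval : g Y * α + g X * β = NN ℙ (α • Y + β • X) := by
      rw [← hg2, map_add, g.map_smul, g.map_smul, smul_eq_mul, smul_eq_mul]; ring
    rcases eq_or_lt_of_le hβ with hβ0 | hβneg
    · -- β = 0
      have hv0 : v < 0 := by
        have hq := hQv 0 (-m) le_rfl le_rfl
        rw [zero_mul, zero_add, hβ0, mul_zero] at hq
        exact hq
      have hNNsmul : 0 ≤ NN ℙ (α • Y + β • X) := by
        rw [hβ0]
        have h9 : α • Y + (0:ℝ) • X = α • Y := by rw [zero_smul, add_zero]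
        rw [h9]
        nlinarith [smul_NN_le α Y, mul_nonneg hα hNNY]
      have hGlt' : g Y * α + g X * β < u := hGlt
      linarith [hGlt', hval, hNNsmul, hv0, huv]
    · -- β < 0
      set l := α / (-β) with hl'
      have hl : 0 ≤ l := div_nonneg hα (by linarith)
      have hsc : (-β) • (l • Y - X) = α • Y + β • X := by
        rw [smul_sub, smul_smul]
        have hc1 : (-β) * l = α := by
          have hne : (-β) ≠ 0 := ne_of_gt (by linarith)
          rw [hl', mul_comm, div_mul_cancel₀ _ hne]
        rw [hc1, neg_smul, sub_neg_eq_add]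
      have h6 : (-β) * NN ℙ (l • Y - X) = NN ℙ (α • Y + β • X) := by
        rw [← hsc, NN_smul (by linarith : (0:ℝ) < -β)]
      have h7 := hkey l hl
      have h8 := hQv 0 (-m) le_rfl le_rfl
      rw [zero_mul, zero_add] at h8
      have hGlt' : g Y * α + g X * β < u := hGlt
      have h9 := mul_le_mul_of_nonneg_left h7 (by linarith : (0:ℝ) ≤ -β)
      nlinarith [h9, h6, hGlt', hval, h8, huv]
  rw [Set.not_disjoint_iff] at hGQ
  obtain ⟨ab, habG, habQ⟩ := hGQ
  obtain ⟨g, hg1, hgY, hgX⟩ := HB2 Y X ab.1 ab.2 (fun s t => habG (s, t))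
  have hb : ∀ Z : Lp ℝ ⊤ ℙ, ‖g Z‖ ≤ 1 * ‖Z‖ := by
    intro Z
    rw [one_mul, Real.norm_eq_abs, abs_le]
    constructor
    · have h2 := (hg1 (-Z)).trans (NN_le_norm (-Z))
      rw [map_neg, norm_neg] at h2
      linarith
    · exact (hg1 Z).trans (NN_le_norm Z)
  refine ⟨LinearMap.mkContinuous g 1 hb, ⟨?_, ?_⟩, ?_, ?_⟩ <;>
    simp only [LinearMap.mkContinuous_apply]
  · show g (ee ℙ) = 1
    have h1 : g (ee ℙ) ≤ 1 := by
      have := hg1 (ee ℙ)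
      have he1 : NN ℙ (ee ℙ) = 1 := by
        have := NN_smul_ee (ℙ := ℙ) 1
        rwa [one_smul] at this
      linarith
    have h2 : g (-ee ℙ) ≤ -1 := by
      have := hg1 (-ee ℙ)
      have he2 : NN ℙ (-ee ℙ) = -1 := by
        have := NN_smul_ee (ℙ := ℙ) (-1)
        rwa [neg_one_smul] at this
      linarith
    rw [map_neg] at h2
    linarith
  · intro Z hZ
    show (0:ℝ) ≤ g Z  -- (after simp only)
    have hae : ∀ᵐ ω ∂ℙ, (-Z : Lp ℝ ⊤ ℙ) ω ≤ 0 := by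
      have h0 := (Lp.coeFn_le (0 : Lp ℝ ⊤ ℙ) Z).mpr hZ
      filter_upwards [h0, Lp.coeFn_neg Z, Lp.coeFn_zero ℝ ⊤ ℙ] with ω h1 h2 h3
      rw [h2]
      rw [h3] at h1
      simpa using h1
    have hNZ : NN ℙ (-Z) ≤ 0 := by
      refine NN_le ?_
      rw [le_smul_ee_iff]
      filter_upwards [hae] with ω h using h
    have := (hg1 (-Z)).trans hNZ
    rw [map_neg] at this
    linarith
  · show (0:ℝ) ≤ g Y
    rw [hgY]; exact habQ.1
  · show m ≤ g (-X)
    rw [map_neg, hgX]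
    have := habQ.2
    linarith

end Aux

/-- Let `(Ω, 𝓕, ℙ)` be a probability space, `L∞(ℙ)` the space of essentially
bounded random variables with unit `e` (the a.s. constant `1`), and `Δ(ℙ)` the set of
continuous linear functionals `p` with `p e = 1` and `p X ≥ 0` whenever `X ≥ 0` a.s.
If `ρ : L∞(ℙ) → ℝ` is a positively homogeneous risk measure, then for every `X`,
`ρ X = min_{Y : ρ Y = 0} max_{p ∈ Δ(ℙ), p Y ≥ 0} p (-X)`, both the minimum and maximum
being attained. -/
theorem stmt15 {Ω : Type*} [MeasurableSpace Ω] (ℙ : Measure Ω) [IsProbabilityMeasure ℙ]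
    (e : Lp ℝ ⊤ ℙ) (he : e = MemLp.toLp (fun _ : Ω => (1 : ℝ)) (memLp_const 1))
    (ρ : Lp ℝ ⊤ ℙ → ℝ)
    (hmono : ∀ X Y : Lp ℝ ⊤ ℙ, X ≤ Y → ρ Y ≤ ρ X)
    (hadd : ∀ (X : Lp ℝ ⊤ ℙ) (c : ℝ), ρ (X + c • e) = ρ X - c)
    (hpos : ∀ (c : ℝ), 0 ≤ c → ∀ X : Lp ℝ ⊤ ℙ, ρ (c • X) = c * ρ X) :
    ∀ X : Lp ℝ ⊤ ℙ,
      IsLeast {r : ℝ | ∃ Y : Lp ℝ ⊤ ℙ, ρ Y = 0 ∧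
        IsGreatest {s : ℝ | ∃ p : Lp ℝ ⊤ ℙ →L[ℝ] ℝ,
          ((p e = 1 ∧ ∀ Z : Lp ℝ ⊤ ℙ, 0 ≤ Z → 0 ≤ p Z) ∧ 0 ≤ p Y) ∧ s = p (-X)} r}
        (ρ X) := by
  have hee : e = ee ℙ := he
  subst hee
  intro X
  constructor
  · -- membership: witness Y₀ = X + ρ X • e
    refine ⟨X + (ρ X) • ee ℙ, by rw [hadd]; ring, ?_, ?_⟩
    · -- ρ X is in the inner set: the maximizing p
      obtain ⟨p, ⟨hpe, hppos⟩, hpY, hpX⟩ :=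
        key_lemma hmono hadd hpos (X + (ρ X) • ee ℙ) X (by rw [hadd]; ring)
      refine ⟨p, ⟨⟨hpe, hppos⟩, hpY⟩, ?_⟩
      -- ρ X = p (-X); we have ρ X ≤ p (-X) and p(Y₀) ≥ 0 gives p(-X) ≤ ρ X
      have h1 : p (X + (ρ X) • ee ℙ) = p X + ρ X := by
        rw [map_add, p.map_smul, smul_eq_mul, hpe, mul_one]
      have h2 : p (-X) = - p X := map_neg p X
      rw [h1] at hpY
      rw [h2] at hpX ⊢
      linarith
    · -- upper bound
      rintro s ⟨p, ⟨⟨hpe, hppos⟩, hpY⟩, rfl⟩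
      have h1 : p (X + (ρ X) • ee ℙ) = p X + ρ X := by
        rw [map_add, p.map_smul, smul_eq_mul, hpe, mul_one]
      rw [h1] at hpY
      rw [map_neg]
      linarith
  · -- lower bound
    rintro r ⟨Y, hY, hgr⟩
    obtain ⟨p, ⟨hpe, hppos⟩, hpY, hpX⟩ := key_lemma hmono hadd hpos Y X hY
    have hmem : p (-X) ∈ {s : ℝ | ∃ p' : Lp ℝ ⊤ ℙ →L[ℝ] ℝ,
        ((p' (ee ℙ) = 1 ∧ ∀ Z : Lp ℝ ⊤ ℙ, 0 ≤ Z → 0 ≤ p' Z) ∧ 0 ≤ p' Y) ∧ s = p' (-X)} :=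
      ⟨p, ⟨⟨hpe, hppos⟩, hpY⟩, rfl⟩
    exact hpX.trans (hgr.2 hmem)
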